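/- With g the Green's function of u'''' on [0,1] with boundary conditions u(0)=u'(0)=u'(1)=u'''(1)=0, the partial derivative ∂g/∂t, given by ∂g/∂t(t,s) = (1/2)s²(1−t) for 0 ≤ s ≤ t ≤ 1 and (1/2)t(s(2−s)−t) for 0 ≤ t < s ≤ 1, satisfies the two-sided bounds φ(s)k₁¹(t) ≤ ∂g/∂t(t,s) ≤ φ(s)k₂¹(t) for all (t,s) ∈ [0,1]², where φ(s) = s², k₁¹(t) = (1/2)t(1−t), and k₂¹(t) = (1/2)(1−t). In particular ∂g/∂t ≥ 0 on [0,1]². -/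

import Mathlib

/-- The Green's function of `u ↦ u''''` on `[0,1]` with boundary conditions
`u(0) = u'(0) = u'(1) = u'''(1) = 0`. -/
noncomputable def greenG (t s : ℝ) : ℝ :=
  if s ≤ t then -(1/12) * s^2 * (2*s + 3*(t - 2)*t)
  else (1/12) * t^2 * (-3*(s - 2)*s - 2*t)

/-- The first `t`-partial derivative of `greenG`. -/
noncomputable def greenG1 (t s : ℝ) : ℝ :=
  if s ≤ t then (1/2) * s^2 * (1 - t)
  else (1/2) * t * (s*(2 - s) - t)

lemma cubicHasDerivAt (a b c d t : ℝ) :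
    HasDerivAt (fun x : ℝ => a + b*x + c*x^2 + d*x^3) (b + 2*c*t + 3*d*t^2) t := by
  have h1 := ((hasDerivAt_id t).const_mul b).const_add a
  have h2 := (hasDerivAt_pow 2 t).const_mul c
  have h3 := (hasDerivAt_pow 3 t).const_mul d
  have := (h1.add h2).add h3
  exact this.congr_deriv (by push_cast; ring)

/-- The partial derivative `∂g/∂t`, given by the piecewise formula
`greenG1`, satisfies `φ(s)k₁¹(t) ≤ ∂g/∂t(t,s) ≤ φ(s)k₂¹(t)` on `[0,1]²` with
`φ(s) = s²`, `k₁¹(t) = (1/2)t(1-t)`, `k₂¹(t) = (1/2)(1-t)`; in particular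
`∂g/∂t ≥ 0` on `[0,1]²`. -/
theorem stmt11 :
    (∀ t s : ℝ, t ≠ s → deriv (fun t => greenG t s) t = greenG1 t s) ∧
    (∀ t ∈ Set.Icc (0 : ℝ) 1, ∀ s ∈ Set.Icc (0 : ℝ) 1,
      s^2 * (1/2 * t * (1 - t)) ≤ greenG1 t s ∧
      greenG1 t s ≤ s^2 * (1/2 * (1 - t)) ∧
      0 ≤ greenG1 t s) := by
  constructor
  · intro t s hts
    rcases lt_or_gt_of_ne hts with h | h
    · -- t < s, second branch
      have heq : (fun x => greenG x s) =ᶠ[nhds t]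
          (fun x => (0:ℝ) + 0*x + (-3*(s-2)*s/12)*x^2 + (-2/12)*x^3) := by
        filter_upwards [Iio_mem_nhds h] with x hx
        rw [greenG, if_neg (not_le.mpr (show x < s from hx))]
        ring
      rw [heq.deriv_eq, (cubicHasDerivAt _ _ _ _ t).deriv, greenG1,
        if_neg (not_le.mpr h)]
      ring
    · -- s < t, first branch
      have heq : (fun x => greenG x s) =ᶠ[nhds t]
          (fun x => (-(1/6)*s^3) + ((1/2)*s^2)*x + (-(1/4)*s^2)*x^2 + 0*x^3) := by
        filter_upwards [Ioi_mem_nhds h] with x hx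
        rw [greenG, if_pos (le_of_lt (show s < x from hx))]
        ring
      rw [heq.deriv_eq, (cubicHasDerivAt _ _ _ _ t).deriv, greenG1,
        if_pos (le_of_lt h)]
      ring
  · rintro t ⟨ht0, ht1⟩ s ⟨hs0, hs1⟩
    by_cases h : s ≤ t
    · rw [greenG1, if_pos h]
      refine ⟨by nlinarith [mul_nonneg (sq_nonneg s) (sq_nonneg (1 - t))],
        by nlinarith, by nlinarith [mul_nonneg (sq_nonneg s) (sub_nonneg.mpr ht1)]⟩
    · rw [greenG1, if_neg h]
      push_neg at h
      refine ⟨by nlinarith [mul_nonneg ht0 (sub_nonneg.mpr hs1),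
          mul_nonneg (mul_nonneg ht0 (sub_nonneg.mpr hs1)) (sub_nonneg.mpr hs1),
          mul_nonneg (mul_nonneg (sub_nonneg.mpr h.le) (sub_nonneg.mpr hs1)) ht0],
        by nlinarith [sq_nonneg (s - t), mul_nonneg (sq_nonneg (s - t)) ht0,
          sub_nonneg.mpr ht1],
        by nlinarith [mul_nonneg ht0 (mul_nonneg hs0 (sub_nonneg.mpr hs1)),
          mul_nonneg ht0 (sub_nonneg.mpr h.le)]⟩
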